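/- Let x^1,...,x^k ∈ S^{n-1} be such that the vectors (x^i,−1) ∈ ℝ^{n+1} are linearly independent, let X be the n×k matrix with columns x^i, X̃ = (X; −1ᵀ) the (n+1)×k matrix with an added row of −1's, and γ = 1ᵀ(X̃ᵀX̃)^{-1}1. If (w*,t*) is a local maximizer of t over the set {(w,t) : Xᵀw = t·1, ⟨w,w⟩ = 1}, then 0 < γ ≤ 1; moreover, if γ < 1 then t* = ±((1−γ)/γ)^{1/2} and w* = ((1+t*²)/t*)·X(X̃ᵀX̃)^{-1}1, while γ = 1 holds if and only if t* = 0. -/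

import Mathlib

open scoped BigOperators
open Matrix

private lemma gram_det_unit {n k : ℕ} (Xt : Matrix (Fin (n+1)) (Fin k) ℝ)
    (hrank : LinearIndependent ℝ (fun i => Xtᵀ i)) :
    IsUnit (Xtᵀ * Xt).det := by
  rw [isUnit_iff_ne_zero]
  intro hdet
  obtain ⟨v, hv0, hv⟩ := (Matrix.exists_mulVec_eq_zero_iff).2 hdet
  have h1 : Xt *ᵥ v = 0 := by
    have h2 : v ⬝ᵥ ((Xtᵀ * Xt) *ᵥ v) = (Xt *ᵥ v) ⬝ᵥ (Xt *ᵥ v) := by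
      rw [← Matrix.mulVec_mulVec, Matrix.dotProduct_mulVec, Matrix.vecMul_transpose]
    rw [hv, dotProduct_zero] at h2
    exact (dotProduct_self_eq_zero).1 h2.symm
  apply hv0
  have := (Fintype.linearIndependent_iff.1 hrank) v ?_
  · funext i; exact this i
  · funext m
    have := congrFun h1 m
    simpa [Matrix.mulVec, dotProduct, mul_comm] using this

private lemma kkt_aux {n k : ℕ} (x : Fin k → (Fin n → ℝ))
    (w : Fin n → ℝ) (t : ℝ)
    (hfeas1 : ∀ i, ∑ j, w j * x i j = t) (hfeas2 : ∑ j, w j ^ 2 = 1)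
    (hlocal : IsLocalMaxOn (fun q : (Fin n → ℝ) × ℝ => q.2)
      {q : (Fin n → ℝ) × ℝ | (∀ i, ∑ j, q.1 j * x i j = q.2) ∧ ∑ j, q.1 j ^ 2 = 1} (w, t)) :
    ∃ (lam : Fin k → ℝ) (μ Λ₀ : ℝ), ¬(μ = 0 ∧ (∀ i, lam i = 0) ∧ Λ₀ = 0) ∧
      (Λ₀ = ∑ i, lam i) ∧ (∀ m, μ * (2 * w m) + ∑ i, lam i * x i m = 0) := by
  classical
  set E := ((Fin n → ℝ) × ℝ)
  set pj : Fin n → (E →L[ℝ] ℝ) := fun j =>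
    (ContinuousLinearMap.proj j).comp (ContinuousLinearMap.fst ℝ (Fin n → ℝ) ℝ) with hpj
  set snd : E →L[ℝ] ℝ := ContinuousLinearMap.snd ℝ (Fin n → ℝ) ℝ with hsnd
  set f : Option (Fin k) → E → ℝ := fun o q =>
    o.elim (∑ j, q.1 j ^ 2) (fun i => (∑ j, q.1 j * x i j) - q.2) with hf
  set f' : Option (Fin k) → (E →L[ℝ] ℝ) := fun o =>
    o.elim (∑ j, (2 * w j) • pj j) (fun i => (∑ j, x i j • pj j) - snd) with hf'
  have hpj' : ∀ j, HasStrictFDerivAt (fun q : E => q.1 j) (pj j) (w, t) :=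
    fun j => (pj j).hasStrictFDerivAt
  have hderiv : ∀ o, HasStrictFDerivAt (f o) (f' o) (w, t) := by
    rintro (_ | i)
    · have h1 : ∀ j : Fin n, HasStrictFDerivAt (fun q : E => q.1 j ^ 2)
          ((2 * w j) • pj j) (w, t) := by
        intro j
        have h0 : HasStrictFDerivAt (fun q : E => q.1 j * q.1 j)
            ((2 * w j) • pj j) (w, t) := by
          rw [show ((2 : ℝ) * w j) • pj j = w j • pj j + w j • pj j by
            rw [← add_smul]; congr 1; ring]
          exact (hpj' j).mul (hpj' j)
        simpa [sq] using h0
      simpa [f, f'] using HasStrictFDerivAt.fun_sum (fun j _ => h1 j)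
    · have h1 : ∀ j : Fin n, HasStrictFDerivAt (fun q : E => q.1 j * x i j)
          (x i j • pj j) (w, t) := by
        intro j
        exact (hpj' j).mul_const (x i j)
      have h2 := HasStrictFDerivAt.sum (fun j (_ : j ∈ Finset.univ) => h1 j)
      simpa +zetaDelta using h2.fun_sub snd.hasStrictFDerivAt
  have hφ : HasStrictFDerivAt (fun q : E => q.2) snd (w, t) := snd.hasStrictFDerivAt
  have hset : {q : E | ∀ o, f o q = f o (w, t)} =
      {q : E | (∀ i, ∑ j, q.1 j * x i j = q.2) ∧ ∑ j, q.1 j ^ 2 = 1} := by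
    ext q
    simp only [Set.mem_setOf_eq, Option.forall, hf, Option.elim, hfeas2]
    constructor
    · rintro ⟨h1, h2⟩
      refine ⟨fun i => ?_, h1⟩
      have := h2 i
      rw [hfeas1 i, sub_self, sub_eq_zero] at this
      exact this
    · rintro ⟨h1, h2⟩
      exact ⟨h2, fun i => by rw [h1 i, hfeas1 i, sub_self, sub_self]⟩
  have hextr : IsLocalExtrOn (fun q : E => q.2) {q : E | ∀ o, f o q = f o (w, t)} (w, t) := by
    rw [hset]; exact Or.inr hlocal
  obtain ⟨Λ, Λ₀, hΛne, hΛeq⟩ := hextr.exists_multipliers_of_hasStrictFDerivAt hderiv hφ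
  refine ⟨fun i => Λ (some i), Λ none, Λ₀, ?_, ?_, ?_⟩
  · rintro ⟨h1, h2, h3⟩
    apply hΛne
    have : Λ = 0 := by funext o; cases o with | none => exact h1 | some i => exact h2 i
    simp [this, h3]
  · have := DFunLike.congr_fun hΛeq ((0 : Fin n → ℝ), (1 : ℝ))
    simp +zetaDelta [Fintype.sum_option, hf', Option.elim, hpj, hsnd] at this
    linarith
  · intro m
    have := DFunLike.congr_fun hΛeq ((Pi.single m 1 : Fin n → ℝ), (0 : ℝ))
    simp +zetaDelta [Fintype.sum_option, hf', Option.elim, hpj, hsnd, Pi.single_apply,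
      Finset.sum_ite_eq', mul_comm] at this
    have h2 : ∑ i, (fun i => Λ (some i)) i * x i m = ∑ i, x i m * Λ (some i) :=
      Finset.sum_congr rfl (fun i _ => mul_comm _ _)
    rw [h2]; linarith

theorem statement8 {n k : ℕ} (x : Fin k → (Fin n → ℝ)) (hx : ∀ i, ∑ j, x i j ^ 2 = 1)
    (X : Matrix (Fin n) (Fin k) ℝ) (hX : X = Matrix.of fun j i => x i j)
    (Xt : Matrix (Fin (n+1)) (Fin k) ℝ)
    (hXt : Xt = Matrix.of fun j i => (Fin.snoc (x i) (-1 : ℝ) : Fin (n+1) → ℝ) j)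
    (hrank : LinearIndependent ℝ (fun i => Xtᵀ i))
    (γ : ℝ) (hγ : γ = ∑ i, ((Xtᵀ * Xt)⁻¹ *ᵥ fun _ => (1:ℝ)) i)
    (w : Fin n → ℝ) (t : ℝ)
    (hfeas : (∀ i, ∑ j, w j * x i j = t) ∧ ∑ j, w j ^ 2 = 1)
    (hlocal : IsLocalMaxOn (fun q : (Fin n → ℝ) × ℝ => q.2)
      {q : (Fin n → ℝ) × ℝ | (∀ i, ∑ j, q.1 j * x i j = q.2) ∧ ∑ j, q.1 j ^ 2 = 1} (w, t)) :
    (0 < γ ∧ γ ≤ 1) ∧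
    (γ < 1 → (t = Real.sqrt ((1 - γ) / γ) ∨ t = -Real.sqrt ((1 - γ) / γ)) ∧
      w = ((1 + t ^ 2) / t) • (X *ᵥ ((Xtᵀ * Xt)⁻¹ *ᵥ fun _ => (1:ℝ)))) ∧
    (γ = 1 ↔ t = 0) := by
  obtain ⟨hfeas1, hfeas2⟩ := hfeas
  obtain ⟨lam, μ, Λ₀, hne, hE1, hE2⟩ := kkt_aux x w t hfeas1 hfeas2 hlocal
  have hdet : IsUnit (Xtᵀ * Xt).det := gram_det_unit Xt hrank
  set u : Fin k → ℝ := (Xtᵀ * Xt)⁻¹ *ᵥ fun _ => (1:ℝ) with hu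
  -- E3 : 2μ + tΛ₀ = 0
  have hE3 : 2 * μ + t * Λ₀ = 0 := by
    have h0 : ∑ m, w m * (μ * (2 * w m) + ∑ i, lam i * x i m) = 0 := by
      simp [hE2]
    have h1 : ∑ m, w m * (μ * (2 * w m)) = 2 * μ := by
      have h : ∑ m, w m * (μ * (2 * w m)) = (2 * μ) * ∑ m, w m ^ 2 := by
        rw [Finset.mul_sum]; exact Finset.sum_congr rfl fun m _ => by ring
      rw [h, hfeas2, mul_one]
    have h2 : ∑ m, w m * (∑ i, lam i * x i m) = t * Λ₀ := by
      have hswap : ∑ m, w m * (∑ i, lam i * x i m)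
          = ∑ i, lam i * (∑ m, w m * x i m) := by
        simp_rw [Finset.mul_sum]
        rw [Finset.sum_comm]
        exact Finset.sum_congr rfl fun i _ => Finset.sum_congr rfl fun m _ => by ring
      rw [hswap]
      have : ∑ i, lam i * (∑ m, w m * x i m) = ∑ i, lam i * t :=
        Finset.sum_congr rfl fun i _ => by rw [hfeas1 i]
      rw [this, ← Finset.sum_mul, ← hE1]; ring
    have h3 : ∑ m, w m * (μ * (2 * w m) + ∑ i, lam i * x i m)
        = (∑ m, w m * (μ * (2 * w m))) + ∑ m, w m * (∑ i, lam i * x i m) := by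
      simp_rw [mul_add]; rw [Finset.sum_add_distrib]
    rw [h3, h1, h2] at h0
    linarith
  -- Λ₀ ≠ 0
  have hΛ₀ : Λ₀ ≠ 0 := by
    intro h
    have hμ : μ = 0 := by rw [h] at hE3; linarith
    have hsum0 : ∑ i, lam i = 0 := by rw [← hE1, h]
    refine hne ⟨hμ, ?_, h⟩
    have := (Fintype.linearIndependent_iff.1 hrank) lam ?_
    · exact this
    · funext m
      simp only [Finset.sum_apply, Pi.smul_apply, smul_eq_mul, Matrix.transpose_apply,
        hXt, Matrix.of_apply, Pi.zero_apply]
      refine Fin.lastCases ?_ (fun m' => ?_) m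
      · simp only [Fin.snoc_last]
        simpa using hsum0
      · simp only [Fin.snoc_castSucc]
        have h5 := hE2 m'
        rw [hμ] at h5
        simpa using h5
  set lam' : Fin k → ℝ := fun i => lam i / Λ₀ with hlam'def
  have hsum' : ∑ i, lam' i = 1 := by
    rw [hlam'def]
    simp only []
    rw [← Finset.sum_div, ← hE1, div_self hΛ₀]
  have hE2' : ∀ m, ∑ i, lam' i * x i m = t * w m := by
    intro m
    have h := hE2 m
    have hS : ∑ i, lam i * x i m = t * Λ₀ * w m := by
      linear_combination h - w m * hE3
    have hdiv : ∑ i, lam' i * x i m = (∑ i, lam i * x i m) / Λ₀ := by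
      rw [Finset.sum_div]
      exact Finset.sum_congr rfl fun i _ => by rw [hlam'def]; field_simp
    rw [hdiv, hS]
    field_simp
  -- A *ᵥ lam' = 1 + t²
  have hAlam : (Xtᵀ * Xt) *ᵥ lam' = fun _ => 1 + t ^ 2 := by
    funext i
    have hAij : ∀ j, (Xtᵀ * Xt) i j = (∑ m, x i m * x j m) + 1 := by
      intro j
      simp only [Matrix.mul_apply, Matrix.transpose_apply, hXt, Matrix.of_apply]
      rw [Fin.sum_univ_castSucc]
      simp [Fin.snoc_castSucc, Fin.snoc_last]
    show ∑ j, (Xtᵀ * Xt) i j * lam' j = 1 + t ^ 2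
    calc ∑ j, (Xtᵀ * Xt) i j * lam' j
        = ∑ j, ((∑ m, x i m * x j m) * lam' j + lam' j) := by
          exact Finset.sum_congr rfl fun j _ => by rw [hAij j]; ring
      _ = (∑ j, (∑ m, x i m * x j m) * lam' j) + ∑ j, lam' j := Finset.sum_add_distrib
      _ = (∑ m, x i m * (∑ j, lam' j * x j m)) + 1 := by
          rw [hsum']; congr 1
          simp_rw [Finset.sum_mul]
          rw [Finset.sum_comm]
          exact Finset.sum_congr rfl fun m _ => by
            rw [Finset.mul_sum]
            exact Finset.sum_congr rfl fun j _ => by ring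
      _ = t * t + 1 := by
          simp_rw [hE2']
          have : ∑ m, x i m * (t * w m) = t * ∑ m, w m * x i m := by
            rw [Finset.mul_sum]
            exact Finset.sum_congr rfl fun m _ => by ring
          rw [this, hfeas1 i]
      _ = 1 + t ^ 2 := by ring
  have hlamu : lam' = fun i => (1 + t ^ 2) * u i := by
    have h1 : (Xtᵀ * Xt)⁻¹ *ᵥ ((Xtᵀ * Xt) *ᵥ lam') = lam' := by
      rw [Matrix.mulVec_mulVec, Matrix.nonsing_inv_mul _ hdet, Matrix.one_mulVec]
    rw [hAlam] at h1
    rw [← h1]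
    have h2 : (fun _ : Fin k => 1 + t ^ 2)
        = (1 + t ^ 2) • (fun _ : Fin k => (1:ℝ)) := by
      funext i; simp
    rw [h2, Matrix.mulVec_smul]
    funext i
    simp [hu]
  have hγ1 : γ * (1 + t ^ 2) = 1 := by
    have h1 : ∑ i, lam' i = (1 + t ^ 2) * ∑ i, u i := by
      rw [hlamu, Finset.mul_sum]
    rw [hsum'] at h1
    rw [hγ]
    linear_combination -h1
  have hγpos : 0 < γ := by nlinarith [sq_nonneg t]
  have hγle : γ ≤ 1 := by nlinarith [sq_nonneg t]
  refine ⟨⟨hγpos, hγle⟩, ?_, ?_⟩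
  · intro hγlt
    have ht0 : t ≠ 0 := by
      intro h; rw [h] at hγ1; norm_num at hγ1; exact absurd hγ1 (ne_of_lt hγlt)
    have ht2 : t ^ 2 = (1 - γ) / γ := by
      rw [eq_div_iff hγpos.ne']
      linear_combination hγ1
    constructor
    · rw [← ht2, Real.sqrt_sq_eq_abs]
      rcases abs_choice t with h | h
      · exact Or.inl h.symm
      · exact Or.inr (by linarith)
    · funext m
      have h := hE2' m
      rw [hlamu] at h
      have h1 : ∑ i, (1 + t ^ 2) * u i * x i m = (1 + t ^ 2) * ∑ i, u i * x i m := by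
        rw [Finset.mul_sum]
        exact Finset.sum_congr rfl fun i _ => by ring
      rw [h1] at h
      have h2 : (X *ᵥ u) m = ∑ i, u i * x i m := by
        simp only [Matrix.mulVec, dotProduct, hX, Matrix.of_apply]
        exact Finset.sum_congr rfl fun i _ => by ring
      simp only [Pi.smul_apply, smul_eq_mul, h2]
      field_simp
      linarith [h]
  · constructor
    · intro h
      have : t ^ 2 = 0 := by rw [h] at hγ1; linarith
      exact pow_eq_zero_iff (by norm_num) |>.1 this
    · intro h
      rw [h] at hγ1; norm_num at hγ1; exact hγ1
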